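/- Let (G_n, δ_n)_{n∈ℕ} be a sequence of proper metric monoids with identity elements e_n, and suppose for each n ∈ ℕ there are ε_n > 0 with Σ_{n=0}^∞ ε_n < √2/2 and a (1/ε_n)-local ε_n-almost isometric isomorphism (ς_n, κ_n) from (G_n,δ_n) to (G_{n+1},δ_{n+1}); assume moreover that for all N ∈ ℕ and all g ∈ G_N[1/Σ_{n=N}^∞ ε_n], the sequence ϖ_N(g) (equal to e_n for n < N, to g at index N, and to ς_{n-1} applied to the previous term for n > N) is regular. For k > n set ς_n^k = ς_{k-1} ∘ ⋯ ∘ ς_n, let H_∞ be the set of regular sequences (g_n)_{n∈ℕ} such that for every ε > 0 there exists N ∈ ℕ with δ_j(g_j, ς_n^j(g_n)) < ε for all n ≥ N and all j > n, let D((g_n),(h_n)) = limsup_{n→∞} δ_n(g_n, h_n), let G_∞ be the quotient of H_∞ by the relation D = 0, and let δ_∞ be the metric induced by D on G_∞. Then for every R > 0, the closed ball of radius R in (G_∞, δ_∞) centered at the class of (e_n)_{n∈ℕ} is totally bounded. -/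
import Mathlib


/-- `(ς, κ)` is an `r`-local `ε`-almost isometric isomorphism between the metric
monoids `G` and `H`. -/
def IsLocAlmostIsoIso {G H : Type*} [Monoid G] [MetricSpace G] [Monoid H] [MetricSpace H]
    (ς : G → H) (κ : H → G) (ε r : ℝ) : Prop :=
  ς 1 = 1 ∧ κ 1 = 1 ∧
    (∀ g ∈ Metric.closedBall (1 : G) r, ∀ g' ∈ Metric.closedBall (1 : G) r,
      ∀ h ∈ Metric.closedBall (1 : H) r,
        |dist (ς g * ς g') h - dist (g * g') (κ h)| ≤ ε) ∧
    (∀ g ∈ Metric.closedBall (1 : H) r, ∀ g' ∈ Metric.closedBall (1 : H) r,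
      ∀ h ∈ Metric.closedBall (1 : G) r,
        |dist (κ g * κ g') h - dist (g * g') (ς h)| ≤ ε)
/-- A sequence through a sequence of metric monoids is bounded when
`sup_n δ_n(e_n, g_n) < ∞`. -/
def BoundedSeq {G : ℕ → Type*} [∀ n, Monoid (G n)] [∀ n, MetricSpace (G n)]
    (g : ∀ n, G n) : Prop :=
  ∃ M : ℝ, ∀ n, dist (1 : G n) (g n) ≤ M

/-- A bounded sequence is regular when the right translations by its terms are
asymptotically uniformly equicontinuous. -/
def RegularSeq {G : ℕ → Type*} [∀ n, Monoid (G n)] [∀ n, MetricSpace (G n)]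
    (g : ∀ n, G n) : Prop :=
  BoundedSeq g ∧
    ∀ ε : ℝ, 0 < ε → ∃ ω : ℝ, 0 < ω ∧ ∃ N : ℕ, ∀ n, N ≤ n → ∀ h k : G n,
      dist h k < ω → dist (h * g n) (k * g n) < ε
/-- Iterated application of the maps `ς` starting at index `N`. -/
def iterMap {G : ℕ → Type*} (ς : ∀ n, G n → G (n + 1)) (N : ℕ) (g : G N) :
    ∀ k : ℕ, G (N + k)
  | 0 => g
  | k + 1 => ς (N + k) (iterMap ς N g k)

/-- The sequence `ϖ_N(g)`: identity before index `N`, `g` at index `N`, and then the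
successive images of `g` under the maps `ς`. -/
def varpi {G : ℕ → Type*} [∀ n, Monoid (G n)] (ς : ∀ n, G n → G (n + 1)) (N : ℕ)
    (g : G N) (n : ℕ) : G n :=
  if h : N ≤ n then cast (congrArg G (Nat.add_sub_cancel' h)) (iterMap ς N g (n - N))
  else 1
/-- The compositions `ς_n^{n+k} = ς_{n+k-1} ∘ ⋯ ∘ ς_n`. -/
def compMap {G : ℕ → Type*} (ς : ∀ n, G n → G (n + 1)) (n : ℕ) :
    ∀ k : ℕ, G n → G (n + k)
  | 0 => fun g => g
  | k + 1 => fun g => ς (n + k) (compMap ς n k g)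

/-- The map `ς_n^j = ς_{j-1} ∘ ⋯ ∘ ς_n : G_n → G_j` for `n ≤ j`. -/
def sigmaComp {G : ℕ → Type*} (ς : ∀ n, G n → G (n + 1)) {n j : ℕ} (h : n ≤ j)
    (g : G n) : G j :=
  cast (congrArg G (Nat.add_sub_cancel' h)) (compMap ς n (j - n) g)

/-- Membership in `H_∞`: regular sequences which are asymptotically coherent with the
maps `ς`. -/
def MemHInf {G : ℕ → Type*} [∀ n, Monoid (G n)] [∀ n, MetricSpace (G n)]
    (ς : ∀ n, G n → G (n + 1)) (g : ∀ n, G n) : Prop :=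
  RegularSeq g ∧
    ∀ ε : ℝ, 0 < ε → ∃ N : ℕ, ∀ n, N ≤ n → ∀ j : ℕ, ∀ hnj : n < j,
      dist (g j) (sigmaComp ς hnj.le (g n)) < ε
/-- The pseudometric `D((g_n), (h_n)) = limsup_n δ_n(g_n, h_n)` on sequences. -/
noncomputable def limsupDist {G : ℕ → Type*} [∀ n, MetricSpace (G n)]
    (g h : ∀ n, G n) : ℝ :=
  Filter.limsup (fun n => dist (g n) (h n)) Filter.atTop

section AuxLemmas

variable {G : ℕ → Type*}

lemma iterMap_eq_compMap (ς : ∀ n, G n → G (n + 1)) (N : ℕ) (g : G N) :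
    ∀ k, iterMap ς N g k = compMap ς N k g
  | 0 => rfl
  | k + 1 => by
      show ς (N + k) (iterMap ς N g k) = ς (N + k) (compMap ς N k g)
      rw [iterMap_eq_compMap ς N g k]

lemma iterMap_cast_eq (ς : ∀ n, G n → G (n + 1)) (N : ℕ) (g : G N) {k k' : ℕ}
    (h : k = k') :
    cast (congrArg (fun k => G (N + k)) h) (iterMap ς N g k) = iterMap ς N g k' := by
  subst h; rfl

lemma compMap_cast_eq (ς : ∀ n, G n → G (n + 1)) (n : ℕ) (g : G n) {k k' : ℕ}
    (h : k = k') :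
    cast (congrArg (fun k => G (n + k)) h) (compMap ς n k g) = compMap ς n k' g := by
  subst h; rfl

lemma sigmaComp_add (ς : ∀ n, G n → G (n + 1)) (n k : ℕ) (g : G n)
    (h : n ≤ n + k) : sigmaComp ς h g = compMap ς n k g := by
  unfold sigmaComp
  exact compMap_cast_eq ς n g (Nat.add_sub_cancel_left n k)

variable [∀ n, Monoid (G n)]

lemma varpi_add (ς : ∀ n, G n → G (n + 1)) (N k : ℕ) (g : G N) :
    varpi ς N g (N + k) = compMap ς N k g := by
  unfold varpi
  rw [dif_pos (Nat.le_add_right N k)]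
  rw [show iterMap ς N g (N + k - N) = compMap ς N (N + k - N) g from
    iterMap_eq_compMap ς N g _]
  exact compMap_cast_eq ς N g (Nat.add_sub_cancel_left N k)

lemma varpi_self (ς : ∀ n, G n → G (n + 1)) (N : ℕ) (g : G N) :
    varpi ς N g N = g :=
  varpi_add ς N 0 g

lemma varpi_succ (ς : ∀ n, G n → G (n + 1)) {N n : ℕ} (h : N ≤ n) (g : G N) :
    varpi ς N g (n + 1) = ς n (varpi ς N g n) := by
  obtain ⟨k, rfl⟩ := Nat.exists_eq_add_of_le h
  calc varpi ς N g (N + k + 1) = compMap ς N (k + 1) g := varpi_add ς N (k + 1) g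
    _ = ς (N + k) (compMap ς N k g) := rfl
    _ = ς (N + k) (varpi ς N g (N + k)) := by rw [varpi_add ς N k g]

lemma sigmaComp_varpi' (ς : ∀ n, G n → G (n + 1)) {N n : ℕ} (hN : N ≤ n) (g : G N) :
    ∀ k (h : n ≤ n + k), sigmaComp ς h (varpi ς N g n) = varpi ς N g (n + k) := by
  intro k
  induction k with
  | zero => intro h; rw [sigmaComp_add]; rfl
  | succ k ih =>
      intro h
      rw [sigmaComp_add]
      calc compMap ς n (k + 1) (varpi ς N g n)
          = ς (n + k) (compMap ς n k (varpi ς N g n)) := rfl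
        _ = ς (n + k) (sigmaComp ς (Nat.le_add_right n k) (varpi ς N g n)) := by
            rw [sigmaComp_add]
        _ = ς (n + k) (varpi ς N g (n + k)) := by rw [ih (Nat.le_add_right n k)]
        _ = varpi ς N g (n + k + 1) :=
            (varpi_succ ς (hN.trans (Nat.le_add_right n k)) g).symm

lemma sigmaComp_varpi (ς : ∀ n, G n → G (n + 1)) {N n j : ℕ} (hN : N ≤ n)
    (hnj : n ≤ j) (g : G N) :
    sigmaComp ς hnj (varpi ς N g n) = varpi ς N g j := by
  obtain ⟨k, rfl⟩ := Nat.exists_eq_add_of_le hnj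
  exact sigmaComp_varpi' ς hN g k hnj

end AuxLemmas

section StepLemmas

variable {G H : Type*} [Monoid G] [MetricSpace G] [Monoid H] [MetricSpace H]

lemma step_forward {ς : G → H} {κ : H → G} {e B : ℝ}
    (hiso : IsLocAlmostIsoIso ς κ e (1 / e)) (he : 0 < e) (hBe : B + e ≤ 1 / e)
    {x y : G} (hx : dist (1 : G) x ≤ B) (hy : dist (1 : G) y ≤ B) :
    dist (1 : H) (ς x) ≤ dist (1 : G) x + e ∧ dist (ς x) (ς y) ≤ dist x y + 2 * e := by
  obtain ⟨hς1, hκ1, hA, hB'⟩ := hiso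
  have hr : (0 : ℝ) ≤ 1 / e := by positivity
  have hBr : B ≤ 1 / e := by linarith
  have h1G : (1 : G) ∈ Metric.closedBall (1 : G) (1 / e) := by
    rw [Metric.mem_closedBall, dist_self]; exact hr
  have h1H : (1 : H) ∈ Metric.closedBall (1 : H) (1 / e) := by
    rw [Metric.mem_closedBall, dist_self]; exact hr
  have hxm : x ∈ Metric.closedBall (1 : G) (1 / e) := by
    rw [Metric.mem_closedBall, dist_comm]; exact hx.trans hBr
  have hym : y ∈ Metric.closedBall (1 : G) (1 / e) := by
    rw [Metric.mem_closedBall, dist_comm]; exact hy.trans hBr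
  -- |dist (ς z) 1 - dist z 1| ≤ e for z in the ball
  have key : ∀ z : G, z ∈ Metric.closedBall (1 : G) (1 / e) →
      |dist (ς z) 1 - dist z 1| ≤ e := by
    intro z hz
    have := hA z hz 1 h1G 1 h1H
    simpa [hς1, hκ1, mul_one] using this
  have hx1 := key x hxm
  have hy1 := key y hym
  have hd1 : dist (1 : H) (ς x) ≤ dist (1 : G) x + e := by
    rw [dist_comm (1 : H), dist_comm (1 : G)]
    have := (abs_le.mp hx1).2; linarith
  refine ⟨hd1, ?_⟩
  have hςym : ς y ∈ Metric.closedBall (1 : H) (1 / e) := by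
    rw [Metric.mem_closedBall]
    have := (abs_le.mp hy1).2
    have hyy : dist y 1 ≤ B := by rw [dist_comm]; exact hy
    linarith
  -- dist (κ (ς y)) y ≤ e
  have hκς : dist (κ (ς y)) y ≤ e := by
    have := hB' (ς y) hςym 1 h1H y hym
    simp only [hκ1, mul_one, dist_self] at this
    have := abs_le.mp this
    linarith [this.2, abs_nonneg (dist (κ (ς y)) y)]
  -- main estimate
  have hmain := hA x hxm 1 h1G (ς y) hςym
  simp only [hς1, mul_one] at hmain
  have h1 := (abs_le.mp hmain).2
  have h2 : dist x (κ (ς y)) ≤ dist x y + dist y (κ (ς y)) := dist_triangle x y (κ (ς y))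
  have h3 : dist y (κ (ς y)) = dist (κ (ς y)) y := dist_comm _ _
  linarith

lemma step_backward {ς : G → H} {κ : H → G} {e B : ℝ}
    (hiso : IsLocAlmostIsoIso ς κ e (1 / e)) (he : 0 < e) (hBe : B + e ≤ 1 / e)
    {z : H} (hz : dist (1 : H) z ≤ B) :
    dist (1 : G) (κ z) ≤ dist (1 : H) z + e ∧ dist (ς (κ z)) z ≤ e := by
  obtain ⟨hς1, hκ1, hA, hB'⟩ := hiso
  have hr : (0 : ℝ) ≤ 1 / e := by positivity
  have hBr : B ≤ 1 / e := by linarith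
  have h1G : (1 : G) ∈ Metric.closedBall (1 : G) (1 / e) := by
    rw [Metric.mem_closedBall, dist_self]; exact hr
  have h1H : (1 : H) ∈ Metric.closedBall (1 : H) (1 / e) := by
    rw [Metric.mem_closedBall, dist_self]; exact hr
  have hzm : z ∈ Metric.closedBall (1 : H) (1 / e) := by
    rw [Metric.mem_closedBall, dist_comm]; exact hz.trans hBr
  have hb1 := hB' z hzm 1 h1H 1 h1G
  simp only [hκ1, hς1, mul_one] at hb1
  have hb1' := abs_le.mp hb1
  have hd1 : dist (1 : G) (κ z) ≤ dist (1 : H) z + e := by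
    rw [dist_comm (1 : G), dist_comm (1 : H)]
    linarith [hb1'.2]
  refine ⟨hd1, ?_⟩
  have hκzm : κ z ∈ Metric.closedBall (1 : G) (1 / e) := by
    rw [Metric.mem_closedBall, dist_comm]
    calc dist (1 : G) (κ z) ≤ dist (1 : H) z + e := hd1
      _ ≤ B + e := by linarith
      _ ≤ 1 / e := hBe
  have ha := hA (κ z) hκzm 1 h1G z hzm
  simp only [hς1, mul_one, dist_self] at ha
  have := abs_le.mp ha
  linarith [this.2, abs_nonneg (dist (ς (κ z)) z)]

end StepLemmas

/-- Under the assumptions of the completeness theorem, every closed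
ball of `(G_∞, δ_∞)` centered at the class of the sequence of identity elements is
totally bounded.  Since `G_∞` is the quotient of `H_∞` by the vanishing of the
pseudometric `D = limsupDist`, and `δ_∞` is the induced metric, this is stated
equivalently at the level of `(H_∞, D)`: for every `R > 0` and `ε > 0`, there is a
finite set `F ⊆ H_∞` such that every element of the closed `D`-ball of radius `R`
centered at `(e_n)_n` is within `D`-distance `ε` of some element of `F`. -/
theorem ball_totallyBounded
    (G : ℕ → Type*) [∀ n, Monoid (G n)] [∀ n, MetricSpace (G n)]
    (h_left : ∀ n, ∀ g h k : G n, dist (g * h) (g * k) = dist h k)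
    (h_cont : ∀ n, Continuous fun p : G n × G n => p.1 * p.2)
    (h_proper : ∀ n, ProperSpace (G n))
    (ε : ℕ → ℝ) (hε : ∀ n, 0 < ε n)
    (ς : ∀ n, G n → G (n + 1)) (κ : ∀ n, G (n + 1) → G n)
    (h_iso : ∀ n, IsLocAlmostIsoIso (ς n) (κ n) (ε n) (1 / ε n))
    (h_sum : Summable ε) (h_sum' : (∑' n, ε n) < Real.sqrt 2 / 2)
    (h_reg : ∀ N : ℕ, ∀ g : G N,
      dist (1 : G N) g ≤ 1 / (∑' k : ℕ, ε (N + k)) → RegularSeq (varpi ς N g)) :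
    ∀ R : ℝ, 0 < R → ∀ η : ℝ, 0 < η →
      ∃ F : Set (∀ n, G n), F.Finite ∧ (∀ f ∈ F, MemHInf ς f) ∧
        ∀ g : ∀ n, G n, MemHInf ς g → limsupDist g (fun n => (1 : G n)) ≤ R →
          ∃ f ∈ F, limsupDist g f < η := by
  classical
  intro R hR η hη
  -- tail sums
  set T : ℕ → ℝ := fun N => ∑' k, ε (N + k) with hTdef
  have hTsum : ∀ N, Summable (fun k => ε (N + k)) := by
    intro N
    have := (summable_nat_add_iff N).mpr h_sum
    simpa [Nat.add_comm] using this
  have hTpos : ∀ N, 0 < T N := fun N =>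
    Summable.tsum_pos (hTsum N) (fun k => (hε _).le) 0 (hε _)
  have hTtend : Filter.Tendsto T Filter.atTop (nhds 0) := by
    have h := tendsto_sum_nat_add ε
    have : (fun i => ∑' k, ε (k + i)) = T := by
      funext i; simp [hTdef, Nat.add_comm]
    rwa [this] at h
  have hpartial : ∀ N a b, N ≤ a → (∑ m ∈ Finset.Ico a b, ε m) ≤ T N := by
    intro N a b hNa
    have h1 : (∑ m ∈ Finset.Ico a b, ε m) ≤ ∑ m ∈ Finset.Ico N b, ε m :=
      Finset.sum_le_sum_of_subset_of_nonneg (Finset.Ico_subset_Ico hNa le_rfl)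
        (fun i _ _ => (hε i).le)
    have h2 : (∑ m ∈ Finset.Ico N b, ε m) = ∑ k ∈ Finset.range (b - N), ε (N + k) :=
      Finset.sum_Ico_eq_sum_range ε N b
    have h3 : (∑ k ∈ Finset.range (b - N), ε (N + k)) ≤ T N :=
      Summable.sum_le_tsum _ (fun k _ => (hε _).le) (hTsum N)
    linarith
  -- choice of N
  have hεtend : Filter.Tendsto ε Filter.atTop (nhds 0) := h_sum.tendsto_atTop_zero
  have e1 : ∀ᶠ m in Filter.atTop, ε m < 1 / (R + 7) :=
    hεtend.eventually_lt_const (by positivity)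
  have e2 : ∀ᶠ m in Filter.atTop, T m < min (η / 16) (1 / (R + 2)) :=
    hTtend.eventually_lt_const (lt_min (by positivity) (by positivity))
  rw [Filter.eventually_atTop] at e1 e2
  obtain ⟨N1, hN1⟩ := e1
  obtain ⟨N2, hN2⟩ := e2
  set N := max N1 N2 with hNdef
  have hNε : ∀ m, N ≤ m → ε m ≤ 1 / (R + 7) :=
    fun m hm => (hN1 m (le_trans (le_max_left _ _) hm)).le
  have hNT : T N < min (η / 16) (1 / (R + 2)) := hN2 N (le_max_right _ _)
  have hTη : T N ≤ η / 16 := (lt_min_iff.mp hNT).1.le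
  have hTR : T N ≤ 1 / (R + 2) := (lt_min_iff.mp hNT).2.le
  have hT1 : T N ≤ 1 := by
    have : (1 : ℝ) / (R + 2) ≤ 1 := by
      rw [div_le_one (by linarith)]; linarith
    linarith
  -- the universal bound B
  set B : ℝ := R + 5 with hBdef
  have hε1 : ∀ m, N ≤ m → ε m ≤ 1 := by
    intro m hm
    have h7 : (1 : ℝ) / (R + 7) ≤ 1 := by
      rw [div_le_one (by linarith)]; linarith
    linarith [hNε m hm]
  have hB : ∀ m, N ≤ m → B + ε m ≤ 1 / ε m := by
    intro m hm
    have h1 : (R + 7 : ℝ) ≤ 1 / ε m := by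
      have := one_div_le_one_div_of_le (hε m) (hNε m hm)
      rwa [one_div_one_div] at this
    have := hε1 m hm
    simp only [hBdef]
    linarith
  -- forward iteration bounds
  have iterb : ∀ k n, N ≤ n → ∀ x y : G n,
      dist (1 : G n) x ≤ B - 1 → dist (1 : G n) y ≤ B - 1 →
      dist (1 : G (n + k)) (compMap ς n k x) ≤
        dist (1 : G n) x + ∑ m ∈ Finset.Ico n (n + k), ε m ∧
      dist (compMap ς n k x) (compMap ς n k y) ≤
        dist x y + 2 * ∑ m ∈ Finset.Ico n (n + k), ε m := by
    intro k
    induction k with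
    | zero =>
        intro n hn x y hx hy
        simp [compMap]
    | succ k ih =>
        intro n hn x y hx hy
        obtain ⟨ih1, ih2⟩ := ih n hn x y hx hy
        obtain ⟨ih1y, -⟩ := ih n hn y y hy hy
        have hsle : (∑ m ∈ Finset.Ico n (n + k), ε m) ≤ T N := hpartial N n (n + k) hn
        have hm : N ≤ n + k := le_trans hn (Nat.le_add_right n k)
        have hx' : dist (1 : G (n + k)) (compMap ς n k x) ≤ B := by linarith
        have hy' : dist (1 : G (n + k)) (compMap ς n k y) ≤ B := by linarith
        have step := step_forward (h_iso (n + k)) (hε (n + k)) (hB (n + k) hm) hx' hy'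
        have hsq : (∑ m ∈ Finset.Ico n (n + k + 1), ε m) =
            (∑ m ∈ Finset.Ico n (n + k), ε m) + ε (n + k) :=
          Finset.sum_Ico_succ_top (Nat.le_add_right n k) ε
        constructor
        · show dist (1 : G (n + k + 1)) (ς (n + k) (compMap ς n k x)) ≤
            dist (1 : G n) x + ∑ m ∈ Finset.Ico n (n + k + 1), ε m
          rw [hsq]
          calc dist (1 : G (n + k + 1)) (ς (n + k) (compMap ς n k x))
              ≤ dist (1 : G (n + k)) (compMap ς n k x) + ε (n + k) := step.1
            _ ≤ dist (1 : G n) x + ((∑ m ∈ Finset.Ico n (n + k), ε m) + ε (n + k)) := by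
                linarith
        · show dist (ς (n + k) (compMap ς n k x)) (ς (n + k) (compMap ς n k y)) ≤
            dist x y + 2 * ∑ m ∈ Finset.Ico n (n + k + 1), ε m
          rw [hsq]
          calc dist (ς (n + k) (compMap ς n k x)) (ς (n + k) (compMap ς n k y))
              ≤ dist (compMap ς n k x) (compMap ς n k y) + 2 * ε (n + k) := step.2
            _ ≤ dist x y + 2 * ((∑ m ∈ Finset.Ico n (n + k), ε m) + ε (n + k)) := by
                linarith
  -- backward (pullback) construction
  have pullb : ∀ k (z : G (N + k)),
      dist (1 : G (N + k)) z + ∑ m ∈ Finset.Ico N (N + k), ε m ≤ B - 1 →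
      ∃ w : G N, dist (1 : G N) w ≤ dist (1 : G (N + k)) z +
          ∑ m ∈ Finset.Ico N (N + k), ε m ∧
        dist (compMap ς N k w) z ≤ 3 * ∑ m ∈ Finset.Ico N (N + k), ε m := by
    intro k
    induction k with
    | zero =>
        intro z hz
        exact ⟨z, by simp [compMap]⟩
    | succ k ih =>
        intro z hz
        have hsq : (∑ m ∈ Finset.Ico N (N + k + 1), ε m) =
            (∑ m ∈ Finset.Ico N (N + k), ε m) + ε (N + k) :=
          Finset.sum_Ico_succ_top (Nat.le_add_right N k) ε
        have hz' : dist (1 : G (N + k + 1)) z +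
            ((∑ m ∈ Finset.Ico N (N + k), ε m) + ε (N + k)) ≤ B - 1 := by
          have hz2 : dist (1 : G (N + k + 1)) z +
              ∑ m ∈ Finset.Ico N (N + k + 1), ε m ≤ B - 1 := hz
          rwa [hsq] at hz2
        have hsum0 : (0 : ℝ) ≤ ∑ m ∈ Finset.Ico N (N + k), ε m :=
          Finset.sum_nonneg fun i _ => (hε i).le
        have hzB : dist (1 : G (N + k + 1)) z ≤ B := by
          have := (hε (N + k)).le; linarith
        have hmN : N ≤ N + k := Nat.le_add_right N k
        have sb := step_backward (h_iso (N + k)) (hε (N + k)) (hB (N + k) hmN) hzB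
        set z' : G (N + k) := κ (N + k) z with hz'def
        have hz'1 : dist (1 : G (N + k)) z' ≤ dist (1 : G (N + k + 1)) z + ε (N + k) :=
          sb.1
        obtain ⟨w, hw1, hw2⟩ := ih z' (by linarith)
        refine ⟨w, ?_, ?_⟩
        · show dist (1 : G N) w ≤ dist (1 : G (N + k + 1)) z +
            ∑ m ∈ Finset.Ico N (N + k + 1), ε m
          rw [hsq]; linarith
        · -- forward bound for w
          have hwB : dist (1 : G N) w ≤ B - 1 := by linarith
          have hz'B : dist (1 : G (N + k)) z' ≤ B - 1 := by
            have := (hε (N + k)).le; linarith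
          obtain ⟨hf1, -⟩ := iterb k N le_rfl w w hwB hwB
          have hsle : (∑ m ∈ Finset.Ico N (N + k), ε m) ≤ T N :=
            hpartial N N (N + k) le_rfl
          have hcB : dist (1 : G (N + k)) (compMap ς N k w) ≤ B := by linarith
          have hz'B2 : dist (1 : G (N + k)) z' ≤ B := by linarith
          have step := step_forward (h_iso (N + k)) (hε (N + k)) (hB (N + k) hmN)
            hcB hz'B2
          show dist (ς (N + k) (compMap ς N k w)) z ≤
            3 * ∑ m ∈ Finset.Ico N (N + k + 1), ε m
          rw [hsq]
          have htri : dist (ς (N + k) (compMap ς N k w)) z ≤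
              dist (ς (N + k) (compMap ς N k w)) (ς (N + k) z') +
                dist (ς (N + k) z') z := dist_triangle _ _ _
          have hsb2 : dist (ς (N + k) z') z ≤ ε (N + k) := sb.2
          linarith [step.2]
  -- the finite net at level N
  haveI := h_proper N
  have hcpt : IsCompact (Metric.closedBall (1 : G N) (R + 2)) :=
    isCompact_closedBall _ _
  obtain ⟨t, htmem, htcov⟩ := hcpt.elim_nhds_subcover (fun x => Metric.ball x (η / 8))
    (fun x _ => Metric.ball_mem_nhds x (by positivity))
  refine ⟨(fun p : G N => varpi ς N p) '' ↑t, t.finite_toSet.image _, ?_, ?_⟩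
  · rintro f ⟨p, hpt, rfl⟩
    have hpball : dist (1 : G N) p ≤ R + 2 := by
      have := htmem p hpt
      rw [Metric.mem_closedBall] at this
      rw [dist_comm]; exact this
    have hreg : RegularSeq (varpi ς N p) := by
      apply h_reg N p
      have h1 : (R + 2 : ℝ) ≤ 1 / T N := by
        have := one_div_le_one_div_of_le (hTpos N) hTR
        rwa [one_div_one_div] at this
      exact hpball.trans h1
    refine ⟨hreg, fun ε' hε' => ⟨N, fun n hn j hnj => ?_⟩⟩
    rw [sigmaComp_varpi ς hn hnj.le p, dist_self]
    exact hε'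
  · intro g hg hgR
    obtain ⟨⟨⟨M, hM⟩, -⟩, hcoh⟩ := hg
    obtain ⟨Ng, hNg⟩ := hcoh (η / 8) (by positivity)
    have hbdd : Filter.IsBoundedUnder (· ≤ ·) Filter.atTop
        (fun n => dist (g n) (1 : G n)) :=
      Filter.isBoundedUnder_of ⟨M, fun n => by rw [dist_comm]; exact hM n⟩
    have hgR' : Filter.limsup (fun n => dist (g n) (1 : G n)) Filter.atTop ≤ R := hgR
    have hev : ∀ᶠ n in Filter.atTop, dist (g n) (1 : G n) < R + 1 :=
      Filter.eventually_lt_of_limsup_lt (lt_of_le_of_lt hgR' (by linarith)) hbdd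
    rw [Filter.eventually_atTop] at hev
    obtain ⟨N3, hN3⟩ := hev
    obtain ⟨n0, hn0N, hn0g, hgn0⟩ : ∃ n0, N ≤ n0 ∧ Ng ≤ n0 ∧
        dist (g n0) (1 : G n0) < R + 1 :=
      ⟨max N (max Ng N3), le_max_left _ _,
        le_trans (le_max_left _ _) (le_max_right _ _),
        hN3 _ (le_trans (le_max_right _ _) (le_max_right _ _))⟩
    obtain ⟨k0, rfl⟩ := Nat.exists_eq_add_of_le hn0N
    have hz1 : dist (1 : G (N + k0)) (g (N + k0)) ≤ R + 1 := by
      rw [dist_comm]; exact hgn0.le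
    have hsum0 : (0 : ℝ) ≤ ∑ m ∈ Finset.Ico N (N + k0), ε m :=
      Finset.sum_nonneg fun i _ => (hε i).le
    have hsle : (∑ m ∈ Finset.Ico N (N + k0), ε m) ≤ T N := hpartial N N _ le_rfl
    obtain ⟨w, hw1, hw2⟩ := pullb k0 (g (N + k0)) (by linarith)
    have hwball : w ∈ Metric.closedBall (1 : G N) (R + 2) := by
      rw [Metric.mem_closedBall, dist_comm]; linarith
    have hwmem := htcov hwball
    rw [Set.mem_iUnion₂] at hwmem
    obtain ⟨p, hpt, hwp⟩ := hwmem
    rw [Metric.mem_ball] at hwp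
    refine ⟨varpi ς N p, ⟨p, hpt, rfl⟩, ?_⟩
    have hpball : dist (1 : G N) p ≤ R + 2 := by
      have := htmem p hpt
      rw [Metric.mem_closedBall] at this
      rw [dist_comm]; exact this
    have hwB : dist (1 : G N) w ≤ B - 1 := by linarith
    have hpB : dist (1 : G N) p ≤ B - 1 := by linarith
    -- the key eventual estimate
    have key : ∀ j, N + k0 + 1 ≤ j → dist (g j) (varpi ς N p j) ≤ η / 4 + 7 * T N := by
      intro j hj
      have hnj : N + k0 < j := hj
      obtain ⟨k1, rfl⟩ := Nat.exists_eq_add_of_le hnj.le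
      have hco := hNg (N + k0) hn0g (N + k0 + k1) hnj
      rw [sigmaComp_add ς (N + k0) k1 (g (N + k0)) hnj.le] at hco
      obtain ⟨-, hlip0⟩ := iterb k0 N le_rfl w p hwB hpB
      have hxy : dist (g (N + k0)) (compMap ς N k0 p) ≤
          dist (g (N + k0)) (compMap ς N k0 w) +
            dist (compMap ς N k0 w) (compMap ς N k0 p) := dist_triangle _ _ _
      have hdw : dist (g (N + k0)) (compMap ς N k0 w) =
          dist (compMap ς N k0 w) (g (N + k0)) := dist_comm _ _
      have hyB : dist (1 : G (N + k0)) (compMap ς N k0 p) ≤ B - 1 := by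
        obtain ⟨hb1, -⟩ := iterb k0 N le_rfl p p hpB hpB
        linarith
      have hxB : dist (1 : G (N + k0)) (g (N + k0)) ≤ B - 1 := by linarith
      obtain ⟨-, hlip1⟩ := iterb k1 (N + k0) hn0N (g (N + k0)) (compMap ς N k0 p) hxB hyB
      have hsle1 : (∑ m ∈ Finset.Ico (N + k0) (N + k0 + k1), ε m) ≤ T N :=
        hpartial N (N + k0) _ hn0N
      have hvp : varpi ς N p (N + k0) = compMap ς N k0 p := varpi_add ς N k0 p
      have hvpj : varpi ς N p (N + k0 + k1) =
          compMap ς (N + k0) k1 (compMap ς N k0 p) := by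
        rw [← sigmaComp_add ς (N + k0) k1 _ (Nat.le_add_right (N + k0) k1), ← hvp,
          sigmaComp_varpi ς hn0N (Nat.le_add_right (N + k0) k1) p]
      calc dist (g (N + k0 + k1)) (varpi ς N p (N + k0 + k1))
          ≤ dist (g (N + k0 + k1)) (compMap ς (N + k0) k1 (g (N + k0))) +
            dist (compMap ς (N + k0) k1 (g (N + k0))) (varpi ς N p (N + k0 + k1)) :=
            dist_triangle _ _ _
        _ ≤ η / 4 + 7 * T N := by
            rw [hvpj]
            linarith
    have hco2 : Filter.limsup (fun j => dist (g j) (varpi ς N p j)) Filter.atTop ≤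
        η / 4 + 7 * T N :=
      Filter.limsup_le_of_le
        (Filter.isCoboundedUnder_le_of_le Filter.atTop fun j => dist_nonneg)
        (Filter.eventually_atTop.mpr ⟨N + k0 + 1, key⟩)
    have hfin : limsupDist g (varpi ς N p) ≤ η / 4 + 7 * T N := hco2
    linarith
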